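/- Let U be the bilateral shift of multiplicity n on L²(𝕋, ℂⁿ). Every closed subspace M of L²(𝕋, ℂⁿ) invariant under U admits a unique decomposition M = M₁ ⊕ M₂ as an orthogonal direct sum, where M₁ is a reducing subspace for U (U M₁ ⊆ M₁ and U* M₁ ⊆ M₁), M₂ is a closed subspace invariant under U, and ⋂_{i∈ℕ} Uⁱ M₂ = {0}. -/

import Mathlib

open MeasureTheory Complex ContinuousLinearMap
open scoped ComplexConjugate ENNReal NNReal

noncomputable section

/-! Basic setup: the unit circle `𝕋 = Circle ⊆ ℂ` with its Borel σ-algebra and its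
normalized arc-length (Haar) probability measure `μc`; the spaces `L²(𝕋, ℂⁿ)` and the
Hardy spaces `H²(ℂⁿ)`; shifts, matrix- (i.e. operator-) valued functions on the circle,
their Fourier coefficients, inner functions and analytic extensions into the unit disk. -/

instance : MeasurableSpace Circle := borel Circle
instance : BorelSpace Circle := ⟨rfl⟩
instance : Fact (0 < 2 * Real.pi) := ⟨by positivity⟩

/-- The normalized arc-length (Haar) probability measure on the unit circle `𝕋`. -/
def μc : Measure Circle :=
  Measure.map AddCircle.homeomorphCircle' AddCircle.haarAddCircle

/-- `ℂⁿ` as a (finite dimensional) Hilbert space. -/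
abbrev Cn (n : ℕ) := EuclideanSpace ℂ (Fin n)

/-- `L²(𝕋, ℂⁿ)`. -/
abbrev L2 (n : ℕ) := Lp (Cn n) 2 μc

/-- The `k`-th Fourier coefficient `f̂(k) = ∫_𝕋 f(z) z̄ᵏ dμ` of a `ℂⁿ`-valued function. -/
def fc {n : ℕ} (f : Circle → Cn n) (k : ℤ) : Cn n :=
  ∫ z, ((starRingEnd ℂ) (z : ℂ)) ^ k • f z ∂μc

/-- The Hardy space `H²(ℂⁿ)`, as a subset of `L²(𝕋, ℂⁿ)`: those `f` whose Fourier
coefficients `f̂(k)` vanish for all `k < 0`. -/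
def H2 (n : ℕ) : Set (L2 n) :=
  {f | ∀ k : ℤ, k < 0 → fc (f : Circle → Cn n) k = 0}

/-- A set `M ⊆ L²(𝕋, ℂⁿ)` is invariant under the shift `U` (multiplication by the
coordinate function `z`): for every `f ∈ M`, the element `U f` (i.e. the element of `L²`
represented by `z ↦ z • f(z)`) again belongs to `M`. -/
def ShiftInv {n : ℕ} (M : Set (L2 n)) : Prop :=
  ∀ f ∈ M, ∃ g ∈ M, (g : Circle → Cn n) =ᵐ[μc] fun z => (z : ℂ) • (f : Circle → Cn n) z

/-- Invariance of `M ⊆ L²(𝕋, ℂⁿ)` under the adjoint `U*` of the bilateral shift,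
i.e. multiplication by `z̄`. -/
def ShiftStarInv {n : ℕ} (M : Set (L2 n)) : Prop :=
  ∀ f ∈ M, ∃ g ∈ M,
    (g : Circle → Cn n) =ᵐ[μc] fun z => ((starRingEnd ℂ) (z : ℂ)) • (f : Circle → Cn n) z

/-- The image `U M` of a set `M ⊆ L²(𝕋, ℂⁿ)` under the shift (multiplication by `z`). -/
def Sset {n : ℕ} (M : Set (L2 n)) : Set (L2 n) :=
  {g | ∃ f ∈ M, (g : Circle → Cn n) =ᵐ[μc] fun z => (z : ℂ) • (f : Circle → Cn n) z}

/-- The image `Uᵏ M` of a set `M ⊆ L²(𝕋, ℂⁿ)` under the `k`-th power of the shift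
(multiplication by `zᵏ`). -/
def shiftPow {n : ℕ} (k : ℕ) (M : Set (L2 n)) : Set (L2 n) :=
  {g | ∃ f ∈ M, (g : Circle → Cn n) =ᵐ[μc] fun z => ((z : ℂ) ^ k) • (f : Circle → Cn n) z}

/-- Multiplication of a set `A ⊆ L²(𝕋, ℂᵐ)` by a matrix- (operator-) valued function `G`
on the circle: `G·A = {G·f : f ∈ A}` inside `L²(𝕋, ℂⁿ)`. -/
def mulSet {m n : ℕ} (G : Circle → (Cn m →L[ℂ] Cn n)) (A : Set (L2 m)) : Set (L2 n) :=
  {h | ∃ f ∈ A, (h : Circle → Cn n) =ᵐ[μc] fun z => G z ((f : Circle → Cn m) z)}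

/-- The `k`-th matrix Fourier coefficient `Ĝ(k) = ∫_𝕋 G(z) z̄ᵏ dμ` of a matrix-valued
function on the circle. -/
def fcM {m n : ℕ} (G : Circle → (Cn m →L[ℂ] Cn n)) (k : ℤ) : Cn m →L[ℂ] Cn n :=
  ∫ z, ((starRingEnd ℂ) (z : ℂ)) ^ k • G z ∂μc

/-- An inner function from `ℂᵐ` to `ℂⁿ`: a measurable, essentially bounded, matrix-valued
function `G` on `𝕋` with `G(z)*G(z) = Iₘ` for a.e. `z` and all negative matrix Fourier
coefficients vanishing. -/
def IsInner {m n : ℕ} (G : Circle → (Cn m →L[ℂ] Cn n)) : Prop :=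
  Measurable G ∧ (∃ C : ℝ, ∀ᵐ z ∂μc, ‖G z‖ ≤ C) ∧
    (∀ᵐ z ∂μc, (ContinuousLinearMap.adjoint (G z)).comp (G z) = ContinuousLinearMap.id ℂ (Cn m)) ∧
    (∀ k : ℤ, k < 0 → fcM G k = 0)

/-- The analytic extension `G(λ) = Σ_{k ≥ 0} Ĝ(k) λᵏ` of a matrix-valued function on the
circle to a point `λ` of the open unit disk. -/
def ext {m n : ℕ} (G : Circle → (Cn m →L[ℂ] Cn n)) (lam : ℂ) : Cn m →L[ℂ] Cn n :=
  ∑' k : ℕ, lam ^ k • fcM G (k : ℤ)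

/-- The analytic extension `h(λ) = Σ_{k ≥ 0} ĥ(k) λᵏ` of a vector-valued function on the
circle to a point `λ` of the open unit disk. -/
def extV {n : ℕ} (h : Circle → Cn n) (lam : ℂ) : Cn n :=
  ∑' k : ℕ, lam ^ k • fc h (k : ℤ)

/-- The orthogonal projection of `ℂⁿ` onto a subspace `N`, as an endomorphism of `ℂⁿ`. -/
def projOn {n : ℕ} (N : Submodule ℂ (Cn n)) : Cn n →L[ℂ] Cn n :=
  N.subtypeL.comp (N.orthogonalProjectionOnto)

/-- A bounded operator `p` on a Hilbert space is an orthogonal projection iff it is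
idempotent and self-adjoint. -/
def IsOrthoProj {E : Type*} [NormedAddCommGroup E] [InnerProductSpace ℂ E] [CompleteSpace E]
    (p : E →L[ℂ] E) : Prop :=
  p.comp p = p ∧ ContinuousLinearMap.adjoint p = p

/-- `H²(N)` for a subspace `N ⊆ ℂⁿ`: those `f ∈ H²(ℂⁿ)` with `f(z) ∈ N` for a.e. `z`. -/
def H2N {n : ℕ} (N : Submodule ℂ (Cn n)) : Set (L2 n) :=
  {f | f ∈ H2 n ∧ ∀ᵐ z ∂μc, (f : Circle → Cn n) z ∈ N}

set_option maxHeartbeats 1000000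

section WoldHelpers

variable {n : ℕ}

lemma memLp_unit_smul (c : Circle → ℂ) (hc : Continuous c) (hc1 : ∀ z, ‖c z‖ = 1)
    (f : L2 n) : MemLp (fun z => c z • (f : Circle → Cn n) z) 2 μc := by
  constructor
  · exact hc.aestronglyMeasurable.smul (Lp.aestronglyMeasurable f)
  · have h : eLpNorm (fun z => c z • (f : Circle → Cn n) z) 2 μc
        = eLpNorm (f : Circle → Cn n) 2 μc :=
      eLpNorm_congr_norm_ae (ae_of_all _ fun z => by rw [norm_smul, hc1, one_mul])
    rw [h]; exact Lp.eLpNorm_lt_top f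

/-- multiplication by `z` as a raw map -/
def mz (f : L2 n) : L2 n :=
  (memLp_unit_smul (fun z => (z : ℂ)) (by continuity) (fun z => Circle.norm_coe z) f).toLp _

lemma mz_coeFn (f : L2 n) :
    (mz f : Circle → Cn n) =ᵐ[μc] fun z => (z : ℂ) • (f : Circle → Cn n) z :=
  MemLp.coeFn_toLp _

/-- multiplication by `conj z` as a raw map -/
def mzc (f : L2 n) : L2 n :=
  (memLp_unit_smul (fun z => (starRingEnd ℂ) (z : ℂ))
    (Complex.continuous_conj.comp (by continuity)) (fun z => by simp [Circle.norm_coe]) f).toLp _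

lemma mzc_coeFn (f : L2 n) :
    (mzc f : Circle → Cn n) =ᵐ[μc]
      fun z => ((starRingEnd ℂ) (z : ℂ)) • (f : Circle → Cn n) z :=
  MemLp.coeFn_toLp _

lemma conj_mul_self (z : Circle) : (starRingEnd ℂ) (z : ℂ) * (z : ℂ) = 1 := by
  rw [← Circle.coe_inv_eq_conj, ← Circle.coe_mul, inv_mul_cancel, Circle.coe_one]

/-- The bilateral shift as a linear isometric equivalence. -/
def shiftL : L2 n ≃ₗᵢ[ℂ] L2 n where
  toFun := mz
  invFun := mzc
  map_add' f g := by
    refine Lp.ext ?_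
    filter_upwards [mz_coeFn (f + g), mz_coeFn f, mz_coeFn g, Lp.coeFn_add f g,
      Lp.coeFn_add (mz f) (mz g)] with z h1 h2 h3 h4 h5
    simp only [Pi.add_apply] at h4 h5
    rw [h1, h5, h2, h3, h4, smul_add]
  map_smul' a f := by
    refine Lp.ext ?_
    simp only [RingHom.id_apply]
    filter_upwards [mz_coeFn (a • f), mz_coeFn f, Lp.coeFn_smul a f,
      Lp.coeFn_smul a (mz f)] with z h1 h2 h3 h4
    simp only [Pi.smul_apply] at h3 h4
    rw [h1, h4, h2, h3]
    exact smul_comm _ _ _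
  left_inv f := by
    refine Lp.ext ?_
    filter_upwards [mzc_coeFn (mz f), mz_coeFn f] with z h1 h2
    rw [h1, h2, smul_smul, conj_mul_self, one_smul]
  right_inv f := by
    refine Lp.ext ?_
    filter_upwards [mz_coeFn (mzc f), mzc_coeFn f] with z h1 h2
    rw [h1, h2, smul_smul, mul_comm, conj_mul_self, one_smul]
  norm_map' f := by
    show ‖mz f‖ = ‖f‖
    rw [mz, Lp.norm_toLp, Lp.norm_def]
    congr 1
    exact eLpNorm_congr_norm_ae (ae_of_all _ fun z => by rw [norm_smul, Circle.norm_coe, one_mul])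

lemma shiftL_coeFn (f : L2 n) :
    (shiftL f : Circle → Cn n) =ᵐ[μc] fun z => (z : ℂ) • (f : Circle → Cn n) z :=
  mz_coeFn f

lemma shiftL_symm_coeFn (f : L2 n) :
    (shiftL.symm f : Circle → Cn n) =ᵐ[μc]
      fun z => ((starRingEnd ℂ) (z : ℂ)) • (f : Circle → Cn n) z :=
  mzc_coeFn f

/-- `U^i` -/
def Li (n : ℕ) : ℕ → (L2 n ≃ₗᵢ[ℂ] L2 n)
  | 0 => LinearIsometryEquiv.refl ℂ (L2 n)
  | (i + 1) => (Li n i).trans shiftL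

lemma Li_succ (i : ℕ) (f : L2 n) : Li n (i + 1) f = shiftL (Li n i f) := rfl

lemma Li_zero (f : L2 n) : Li n 0 f = f := rfl

lemma Li_coeFn (i : ℕ) (f : L2 n) :
    (Li n i f : Circle → Cn n) =ᵐ[μc] fun z => ((z : ℂ) ^ i) • (f : Circle → Cn n) z := by
  induction i with
  | zero => simpa [Li] using Filter.EventuallyEq.refl _ _
  | succ i ih =>
    rw [Li_succ]
    filter_upwards [shiftL_coeFn (Li n i f), ih] with z h1 h2
    rw [h1, h2, smul_smul, pow_succ, mul_comm]

lemma Li_comm (i : ℕ) (f : L2 n) : shiftL (Li n i f) = Li n i (shiftL f) := by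
  induction i with
  | zero => rfl
  | succ i ih => rw [Li_succ, ih, Li_succ]

lemma shiftInv_iff (S : Set (L2 n)) : ShiftInv S ↔ ∀ f ∈ S, shiftL f ∈ S := by
  constructor
  · intro h f hf
    obtain ⟨g, hg, hae⟩ := h f hf
    rwa [show shiftL f = g from Lp.ext ((shiftL_coeFn f).trans hae.symm)]
  · intro h f hf
    exact ⟨shiftL f, h f hf, shiftL_coeFn f⟩

lemma shiftStarInv_iff (S : Set (L2 n)) : ShiftStarInv S ↔ ∀ f ∈ S, shiftL.symm f ∈ S := by
  constructor
  · intro h f hf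
    obtain ⟨g, hg, hae⟩ := h f hf
    rwa [show shiftL.symm f = g from Lp.ext ((shiftL_symm_coeFn f).trans hae.symm)]
  · intro h f hf
    exact ⟨shiftL.symm f, h f hf, shiftL_symm_coeFn f⟩

lemma mem_shiftPow (i : ℕ) (S : Set (L2 n)) (g : L2 n) :
    g ∈ shiftPow i S ↔ ∃ f ∈ S, g = Li n i f := by
  constructor
  · rintro ⟨f, hf, hae⟩
    exact ⟨f, hf, Lp.ext (hae.trans (Li_coeFn i f).symm)⟩
  · rintro ⟨f, hf, rfl⟩
    exact ⟨f, hf, Li_coeFn i f⟩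

lemma hLiInv (S : Submodule ℂ (L2 n)) (hS : ∀ f ∈ S, shiftL f ∈ S) (i : ℕ) :
    ∀ f ∈ S, Li n i f ∈ S := by
  induction i with
  | zero => intro f hf; exact hf
  | succ i ih => intro f hf; rw [Li_succ]; exact hS _ (ih f hf)


end WoldHelpers

/-- **Wold decomposition.** Every closed subspace `M` of `L²(𝕋, ℂⁿ)` invariant under the
bilateral shift `U` has a unique decomposition `M = M₁ ⊕ M₂` (orthogonal direct sum) with
`M₁` a closed reducing subspace for `U` (`U M₁ ⊆ M₁` and `U* M₁ ⊆ M₁`), `M₂` a closed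
invariant subspace of `U`, and `⋂_{i ∈ ℕ} Uⁱ M₂ = {0}`. -/
theorem wold_decomposition {n : ℕ} (hn : 0 < n) (M : Submodule ℂ (L2 n))
    (hMc : IsClosed (M : Set (L2 n))) (hMinv : ShiftInv (M : Set (L2 n))) :
    ∃! MM : Submodule ℂ (L2 n) × Submodule ℂ (L2 n),
      IsClosed (MM.1 : Set (L2 n)) ∧ IsClosed (MM.2 : Set (L2 n)) ∧
      ShiftInv (MM.1 : Set (L2 n)) ∧ ShiftStarInv (MM.1 : Set (L2 n)) ∧
      ShiftInv (MM.2 : Set (L2 n)) ∧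
      (∀ x ∈ MM.1, ∀ y ∈ MM.2, (inner ℂ x y : ℂ) = 0) ∧
      ((M : Set (L2 n)) = {v | ∃ x ∈ MM.1, ∃ y ∈ MM.2, v = x + y}) ∧
      (⋂ i : ℕ, shiftPow i (MM.2 : Set (L2 n))) = {0} := by
  classical
  have hU : ∀ f, f ∈ M → shiftL f ∈ M := (shiftInv_iff _).mp hMinv
  set Mi : ℕ → Submodule ℂ (L2 n) :=
    fun i => M.map ((Li n i).toLinearEquiv : L2 n →ₗ[ℂ] L2 n) with hMidef
  have hMi_mem : ∀ (i : ℕ) (x : L2 n), x ∈ Mi i ↔ ∃ f ∈ M, Li n i f = x := by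
    intro i x
    exact Submodule.mem_map
  set M₁ : Submodule ℂ (L2 n) := ⨅ i, Mi i with hM₁def
  have hmemM₁ : ∀ x : L2 n, x ∈ M₁ ↔ ∀ i, x ∈ Mi i := fun x => Submodule.mem_iInf _
  set M₂ : Submodule ℂ (L2 n) := M ⊓ M₁ᗮ with hM₂def
  have hM₁M : M₁ ≤ M := by
    intro x hx
    obtain ⟨f, hf, hfx⟩ := (hMi_mem 0 x).1 ((hmemM₁ x).1 hx 0)
    rw [Li_zero] at hfx
    exact hfx ▸ hf
  have hMiclosed : ∀ i, IsClosed ((Mi i : Set (L2 n))) := by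
    intro i
    have h : (Mi i : Set (L2 n)) = (Li n i) '' (M : Set (L2 n)) := Submodule.map_coe _ _
    rw [h]
    exact ((Li n i).toHomeomorph).isClosedMap _ hMc
  have hM₁closed : IsClosed (M₁ : Set (L2 n)) := by
    rw [hM₁def, Submodule.coe_iInf]
    exact isClosed_iInter fun i => hMiclosed i
  have hM₂closed : IsClosed (M₂ : Set (L2 n)) := by
    rw [hM₂def, Submodule.coe_inf]
    exact hMc.inter (Submodule.isClosed_orthogonal M₁)
  have hUM₁ : ∀ x, x ∈ M₁ → shiftL x ∈ M₁ := by
    intro x hx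
    refine (hmemM₁ _).2 fun i => ?_
    obtain ⟨f, hf, rfl⟩ := (hMi_mem i x).1 ((hmemM₁ x).1 hx i)
    exact (hMi_mem i _).2 ⟨shiftL f, hU f hf, (Li_comm i f).symm⟩
  have hUsM₁ : ∀ x, x ∈ M₁ → shiftL.symm x ∈ M₁ := by
    intro x hx
    refine (hmemM₁ _).2 fun i => ?_
    obtain ⟨f, hf, rfl⟩ := (hMi_mem (i+1) x).1 ((hmemM₁ x).1 hx (i+1))
    refine (hMi_mem i _).2 ⟨f, hf, ?_⟩
    rw [Li_succ]
    simp
  have hUM₂ : ∀ y, y ∈ M₂ → shiftL y ∈ M₂ := by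
    intro y hy
    obtain ⟨hyM, hyO⟩ := Submodule.mem_inf.1 hy
    refine Submodule.mem_inf.2 ⟨hU y hyM, (Submodule.mem_orthogonal _ _).2 fun u hu => ?_⟩
    have h1 : (inner ℂ u (shiftL y) : ℂ) = inner ℂ (shiftL (shiftL.symm u)) (shiftL y) := by simp
    rw [h1, LinearIsometryEquiv.inner_map_map]
    exact (Submodule.mem_orthogonal _ _).1 hyO _ (hUsM₁ u hu)
  haveI : CompleteSpace M₁ := hM₁closed.completeSpace_coe
  have horthMM : ∀ x ∈ M₁, ∀ y ∈ M₂, (inner ℂ x y : ℂ) = 0 := by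
    intro x hx y hy
    exact (Submodule.mem_orthogonal _ _).1 (Submodule.mem_inf.1 hy).2 x hx
  have hdecomp : (M : Set (L2 n)) = {v | ∃ x ∈ M₁, ∃ y ∈ M₂, v = x + y} := by
    ext v
    constructor
    · intro hv
      obtain ⟨x, hx, w, hw, hvxw⟩ := M₁.exists_add_mem_mem_orthogonal v
      refine ⟨x, hx, w, Submodule.mem_inf.2 ⟨?_, hw⟩, hvxw⟩
      have hwv : w = v - x := by rw [hvxw]; abel
      rw [hwv]
      exact Submodule.sub_mem M hv (hM₁M hx)
    · rintro ⟨x, hx, y, hy, rfl⟩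
      exact Submodule.add_mem M (hM₁M hx) (Submodule.mem_inf.1 hy).1
  have hzero_mem : ∀ i : ℕ, (0 : L2 n) ∈ shiftPow i (M₂ : Set (L2 n)) := fun i =>
    (mem_shiftPow i _ 0).2 ⟨0, Submodule.zero_mem _, (map_zero _).symm⟩
  have hinter : (⋂ i : ℕ, shiftPow i (M₂ : Set (L2 n))) = {0} := by
    ext v
    simp only [Set.mem_iInter, Set.mem_singleton_iff]
    constructor
    · intro hv
      have hv0 : v ∈ M₂ := by
        obtain ⟨f, hf, hfv⟩ := (mem_shiftPow 0 _ v).1 (hv 0)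
        rw [Li_zero] at hfv
        exact hfv ▸ hf
      have hvM₁ : v ∈ M₁ := (hmemM₁ v).2 fun i => by
        obtain ⟨f, hf, rfl⟩ := (mem_shiftPow i _ v).1 (hv i)
        exact (hMi_mem i _).2 ⟨f, (Submodule.mem_inf.1 hf).1, rfl⟩
      exact inner_self_eq_zero.1
        ((Submodule.mem_orthogonal _ _).1 (Submodule.mem_inf.1 hv0).2 v hvM₁)
    · rintro rfl
      exact hzero_mem
  refine ⟨⟨M₁, M₂⟩, ⟨hM₁closed, hM₂closed, (shiftInv_iff _).2 hUM₁, (shiftStarInv_iff _).2 hUsM₁,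
    (shiftInv_iff _).2 hUM₂, horthMM, hdecomp, hinter⟩, ?_⟩
  rintro ⟨N₁, N₂⟩ ⟨hc1, hc2, hi1, hsi1, hi2, horth, hsum, hint⟩
  have hU1 : ∀ f, f ∈ N₁ → shiftL f ∈ N₁ := (shiftInv_iff _).mp hi1
  have hUs1 : ∀ f, f ∈ N₁ → shiftL.symm f ∈ N₁ := (shiftStarInv_iff _).mp hsi1
  have hU2 : ∀ f, f ∈ N₂ → shiftL f ∈ N₂ := (shiftInv_iff _).mp hi2
  have hN₁M : ∀ x, x ∈ N₁ → x ∈ M := by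
    intro x hx
    have : x ∈ (M : Set (L2 n)) := by
      rw [hsum]
      exact ⟨x, hx, 0, N₂.zero_mem, (add_zero x).symm⟩
    exact this
  have hN₂M : ∀ y, y ∈ N₂ → y ∈ M := by
    intro y hy
    have : y ∈ (M : Set (L2 n)) := by
      rw [hsum]
      exact ⟨0, N₁.zero_mem, y, hy, (zero_add y).symm⟩
    exact this
  have hN₁M₁ : N₁ ≤ M₁ := by
    intro x hx
    have key : ∀ i : ℕ, ∃ f ∈ N₁, Li n i f = x := by
      intro i
      induction i with
      | zero => exact ⟨x, hx, rfl⟩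
      | succ i ih =>
        obtain ⟨f, hf, hfx⟩ := ih
        refine ⟨shiftL.symm f, hUs1 f hf, ?_⟩
        rw [Li_succ, Li_comm, LinearIsometryEquiv.apply_symm_apply, hfx]
    refine (hmemM₁ _).2 fun i => ?_
    obtain ⟨f, hf, hfx⟩ := key i
    exact (hMi_mem i _).2 ⟨f, hN₁M f hf, hfx⟩
  have hM₁N₁ : M₁ ≤ N₁ := by
    intro x hx
    have hdec : ∀ i : ℕ, ∃ a ∈ N₁, ∃ b,
        b ∈ N₂ ∧ b ∈ shiftPow i (N₂ : Set (L2 n)) ∧ x = a + b := by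
      intro i
      obtain ⟨f, hf, rfl⟩ := (hMi_mem i x).1 ((hmemM₁ x).1 hx i)
      have hfM : f ∈ {v | ∃ x ∈ N₁, ∃ y ∈ N₂, v = x + y} := by
        rw [← hsum]; exact hf
      obtain ⟨a, ha, b, hb, rfl⟩ := hfM
      exact ⟨Li n i a, hLiInv N₁ hU1 i a ha, Li n i b, hLiInv N₂ hU2 i b hb,
        (mem_shiftPow i _ _).2 ⟨b, hb, rfl⟩, by rw [map_add]⟩
    obtain ⟨a0, ha0, b0, hb0, hb0p, hx0⟩ := hdec 0
    have hb00 : b0 = 0 := by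
      have hball : ∀ i : ℕ, b0 ∈ shiftPow i (N₂ : Set (L2 n)) := by
        intro i
        obtain ⟨a, ha, b, hb, hbp, hxi⟩ := hdec i
        have h : a0 + b0 = a + b := hx0.symm.trans hxi
        have hw : a0 - a = b - b0 := by
          rw [sub_eq_sub_iff_add_eq_add, h, add_comm]
        have hwN₁ : a0 - a ∈ N₁ := N₁.sub_mem ha0 ha
        have hwN₂ : a0 - a ∈ N₂ := hw ▸ N₂.sub_mem hb hb0
        have hza : a0 - a = 0 := inner_self_eq_zero.1 (horth _ hwN₁ _ hwN₂)
        have hbb : b0 = b := by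
          have : b - b0 = 0 := hw ▸ hza
          have := sub_eq_zero.1 this
          exact this.symm
        rw [hbb]
        exact hbp
      have : b0 ∈ (⋂ i : ℕ, shiftPow i (N₂ : Set (L2 n))) := Set.mem_iInter.2 hball
      rw [hint] at this
      exact this
    rw [hx0, hb00, add_zero]
    exact ha0
  have hEq1 : N₁ = M₁ := le_antisymm hN₁M₁ hM₁N₁
  have hEq2 : N₂ = M₂ := by
    apply le_antisymm
    · intro y hy
      refine Submodule.mem_inf.2 ⟨hN₂M y hy, ?_⟩
      rw [← hEq1]
      exact (Submodule.mem_orthogonal _ _).2 fun u hu => horth u hu y hy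
    · intro v hv
      obtain ⟨hvM, hvO⟩ := Submodule.mem_inf.1 hv
      rw [← hEq1] at hvO
      have hvs : v ∈ {v | ∃ x ∈ N₁, ∃ y ∈ N₂, v = x + y} := by
        rw [← hsum]; exact hvM
      obtain ⟨a, ha, b, hb, rfl⟩ := hvs
      have h0 : (inner ℂ a (a + b) : ℂ) = 0 := (Submodule.mem_orthogonal _ _).1 hvO a ha
      rw [inner_add_right, horth a ha b hb, add_zero] at h0
      have ha0 : a = 0 := inner_self_eq_zero.1 h0
      rw [ha0, zero_add]
      exact hb
  exact Prod.ext hEq1 hEq2
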